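/- Let f : ℝ^d → ℝ be twice continuously differentiable with L_H-Lipschitz continuous Hessian, let x ∈ ℝ^d, and let K be a linear subspace of ℝ^d on which the Hessian at x is uniformly positive, i.e., ⟨z, ∇²f(x) z⟩ ≥ σ‖z‖² for all z ∈ K, for some σ > 0. Then for every d ∈ K with ‖d‖ ≤ 2σ/L_H, one has f(x + d) ≥ f(x) + ⟨∇f(x), d⟩. -/

import Mathlib

open scoped RealInnerProductSpace

/-- The Hessian of `f : ℝ^d → ℝ` at `x`, as the derivative of the gradient. -/
noncomputable def hessian {d : ℕ} (f : EuclideanSpace ℝ (Fin d) → ℝ)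
    (x : EuclideanSpace ℝ (Fin d)) :
    EuclideanSpace ℝ (Fin d) →L[ℝ] EuclideanSpace ℝ (Fin d) :=
  fderiv ℝ (gradient f) x

/-- Local convexity: if the Hessian at `x` is uniformly positive on a subspace `K`, then
`f` lies above its linearization at `x` within a small ball of `K`. -/
theorem local_convexity_on_subspace {d : ℕ} (f : EuclideanSpace ℝ (Fin d) → ℝ)
    (LH σ : ℝ) (hLH : 0 < LH) (hσ : 0 < σ)
    (hf : ContDiff ℝ 2 f)
    (hLip : ∀ x y : EuclideanSpace ℝ (Fin d), ‖hessian f x - hessian f y‖ ≤ LH * ‖x - y‖)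
    (x : EuclideanSpace ℝ (Fin d)) (K : Submodule ℝ (EuclideanSpace ℝ (Fin d)))
    (hK : ∀ z ∈ K, σ * ‖z‖ ^ 2 ≤ ⟪z, hessian f x z⟫) :
    ∀ v ∈ K, ‖v‖ ≤ 2 * σ / LH → f x + ⟪gradient f x, v⟫ ≤ f (x + v) := by
  intro v hvK hv
  have hf1 : Differentiable ℝ f := hf.differentiable two_ne_zero
  have hfd : Differentiable ℝ (fderiv ℝ f) :=
    (hf.fderiv_right (m := 1) (by norm_num)).differentiable one_ne_zero
  have hg : Differentiable ℝ (gradient f) := by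
    have : gradient f = fun y => (InnerProductSpace.toDual ℝ _).symm (fderiv ℝ f y) := rfl
    rw [this]
    exact (InnerProductSpace.toDual ℝ _).symm.differentiable.comp hfd
  have hHess : ∀ y, HasFDerivAt (gradient f) (hessian f y) y := fun y => (hg y).hasFDerivAt
  -- the line
  set g : ℝ → EuclideanSpace ℝ (Fin d) := fun t => x + t • v with hgdef
  have hgder : ∀ t : ℝ, HasDerivAt g v t := by
    intro t
    have : HasDerivAt (fun t : ℝ => x + t • v) ((1 : ℝ) • v) t :=
      ((hasDerivAt_id t).smul_const v).const_add x
    rw [one_smul] at this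
    exact this
  have hg0 : g 0 = x := by simp [hgdef]
  have hg1 : g 1 = x + v := by simp [hgdef]
  -- first derivative of f along the line
  have hA : ∀ t : ℝ, HasDerivAt (fun s => f (g s)) ⟪gradient f (g t), v⟫ t := by
    intro t
    have h1 : HasFDerivAt f (InnerProductSpace.toDual ℝ _ (gradient f (g t))) (g t) :=
      (hf1 (g t)).hasGradientAt
    have := h1.comp_hasDerivAt t (hgder t)
    exact this
  -- second derivative along the line
  have hB : ∀ t : ℝ, HasDerivAt (fun s => ⟪gradient f (g s), v⟫) ⟪hessian f (g t) v, v⟫ t := by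
    intro t
    have h1 : HasDerivAt (fun s => gradient f (g s)) (hessian f (g t) v) t :=
      (hHess (g t)).comp_hasDerivAt t (hgder t)
    have := h1.inner ℝ (hasDerivAt_const t v)
    simpa using this
  set c : ℝ := σ * ‖v‖ ^ 2 with hcdef
  have hc0 : 0 ≤ c := by positivity
  -- pointwise lower bound on the second derivative
  have hC : ∀ t : ℝ, t ∈ Set.Icc (0:ℝ) 1 → c * (1 - 2 * t) ≤ ⟪hessian f (g t) v, v⟫ := by
    intro t ht
    have hbase : σ * ‖v‖ ^ 2 ≤ ⟪v, hessian f x v⟫ := hK v hvK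
    have h1 : |⟪(hessian f (g t) - hessian f x) v, v⟫| ≤
        ‖(hessian f (g t) - hessian f x) v‖ * ‖v‖ := abs_real_inner_le_norm _ _
    have h2 : ‖(hessian f (g t) - hessian f x) v‖ ≤ ‖hessian f (g t) - hessian f x‖ * ‖v‖ :=
      ContinuousLinearMap.le_opNorm _ _
    have h3 : ‖hessian f (g t) - hessian f x‖ ≤ LH * (t * ‖v‖) := by
      have h3' := hLip (g t) x
      have hnorm : ‖g t - x‖ = t * ‖v‖ := by
        simp [hgdef, norm_smul, abs_of_nonneg ht.1]
      rwa [hnorm] at h3'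
    have hdiff : |⟪(hessian f (g t) - hessian f x) v, v⟫| ≤ (LH * (t * ‖v‖)) * (‖v‖ * ‖v‖) := by
      nlinarith [norm_nonneg v, norm_nonneg ((hessian f (g t) - hessian f x) v),
        abs_nonneg ⟪(hessian f (g t) - hessian f x) v, v⟫]
    have hLv : LH * ‖v‖ ≤ 2 * σ := by
      have h := (le_div_iff₀ hLH).mp hv
      linarith
    have hsplit : ⟪hessian f (g t) v, v⟫ =
        ⟪v, hessian f x v⟫ + ⟪(hessian f (g t) - hessian f x) v, v⟫ := by
      rw [ContinuousLinearMap.sub_apply, inner_sub_left, real_inner_comm v (hessian f x v)]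
      ring
    have h4 : -((LH * (t * ‖v‖)) * (‖v‖ * ‖v‖)) ≤ ⟪(hessian f (g t) - hessian f x) v, v⟫ :=
      neg_le_of_abs_le hdiff
    have h5 : (LH * (t * ‖v‖)) * (‖v‖ * ‖v‖) ≤ 2 * σ * t * ‖v‖ ^ 2 := by
      have h6 : (LH * ‖v‖) * t ≤ (2 * σ) * t := mul_le_mul_of_nonneg_right hLv ht.1
      have h7 := mul_le_mul_of_nonneg_right h6 (mul_nonneg (norm_nonneg v) (norm_nonneg v))
      nlinarith [h7]
    have hc' : c * (1 - 2 * t) = σ * ‖v‖ ^ 2 - 2 * σ * t * ‖v‖ ^ 2 := by rw [hcdef]; ring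
    rw [hsplit, hc']
    linarith
  -- the auxiliary function h and its derivatives
  set φ : ℝ → ℝ := fun t => f (g t) with hφdef
  set φ' : ℝ → ℝ := fun t => ⟪gradient f (g t), v⟫ with hφ'def
  set h : ℝ → ℝ := fun t => φ t - φ 0 - t * φ' 0 + c * (t ^ 3 / 3 - t ^ 2 / 2) with hhdef
  set h' : ℝ → ℝ := fun t => φ' t - φ' 0 + c * (t ^ 2 - t) with hh'def
  set h'' : ℝ → ℝ := fun t => ⟪hessian f (g t) v, v⟫ + c * (2 * t - 1) with hh''def
  have hpoly : ∀ t : ℝ, HasDerivAt (fun s : ℝ => c * (s ^ 3 / 3 - s ^ 2 / 2)) (c * (t ^ 2 - t)) t := by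
    intro t
    have h0 := (((hasDerivAt_pow 3 t).div_const 3).sub ((hasDerivAt_pow 2 t).div_const 2)).const_mul c
    exact h0.congr_deriv (by ring)
  have hpoly' : ∀ t : ℝ, HasDerivAt (fun s : ℝ => c * (s ^ 2 - s)) (c * (2 * t - 1)) t := by
    intro t
    have h0 := (((hasDerivAt_pow 2 t).sub (hasDerivAt_id t))).const_mul c
    exact h0.congr_deriv (by ring)
  have hh'at : ∀ t : ℝ, HasDerivAt h (h' t) t := by
    intro t
    have h1 : HasDerivAt (fun s : ℝ => φ s - φ 0 - s * φ' 0 + c * (s ^ 3 / 3 - s ^ 2 / 2))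
        (φ' t - φ' 0 + c * (t ^ 2 - t)) t := by
      have hlin : HasDerivAt (fun s : ℝ => s * φ' 0) (φ' 0) t := by
        simpa using (hasDerivAt_id t).mul_const (φ' 0)
      have := (((hA t).sub_const (φ 0)).sub hlin).add (hpoly t)
      exact this
    exact h1
  have hh''at : ∀ t : ℝ, HasDerivAt h' (h'' t) t := by
    intro t
    have h1 : HasDerivAt (fun s : ℝ => φ' s - φ' 0 + c * (s ^ 2 - s))
        (⟪hessian f (g t) v, v⟫ + c * (2 * t - 1)) t :=
      ((hB t).sub_const (φ' 0)).add (hpoly' t)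
    exact h1
  -- h' is nonnegative on [0,1]
  have hh'0 : h' 0 = 0 := by simp [hh'def]
  have hmono1 : MonotoneOn h' (Set.Icc (0:ℝ) 1) := by
    apply monotoneOn_of_deriv_nonneg (convex_Icc 0 1)
    · exact (Differentiable.continuous fun t => (hh''at t).differentiableAt).continuousOn
    · exact (Differentiable.differentiableOn fun t => (hh''at t).differentiableAt)
    · intro t ht
      rw [interior_Icc] at ht
      rw [(hh''at t).deriv]
      have := hC t ⟨le_of_lt ht.1, le_of_lt ht.2⟩
      rw [hh''def]
      dsimp only
      linarith
  have hh'nonneg : ∀ t ∈ Set.Icc (0:ℝ) 1, 0 ≤ h' t := by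
    intro t ht
    have := hmono1 (Set.left_mem_Icc.2 zero_le_one) ht ht.1
    rwa [hh'0] at this
  have hmono2 : MonotoneOn h (Set.Icc (0:ℝ) 1) := by
    apply monotoneOn_of_deriv_nonneg (convex_Icc 0 1)
    · exact (Differentiable.continuous fun t => (hh'at t).differentiableAt).continuousOn
    · exact (Differentiable.differentiableOn fun t => (hh'at t).differentiableAt)
    · intro t ht
      rw [interior_Icc] at ht
      rw [(hh'at t).deriv]
      exact hh'nonneg t ⟨le_of_lt ht.1, le_of_lt ht.2⟩
  have hfin : h 0 ≤ h 1 :=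
    hmono2 (Set.left_mem_Icc.2 zero_le_one) (Set.right_mem_Icc.2 zero_le_one) zero_le_one
  have hh0 : h 0 = 0 := by simp [hhdef]
  have hh1 : h 1 = f (x + v) - f x - ⟪gradient f x, v⟫ + c * (1 / 3 - 1 / 2) := by
    simp only [hhdef, hφdef, hφ'def, hg0, hg1]
    ring_nf
  rw [hh0, hh1] at hfin
  linarith
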